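/- Let δ > 0, ε > 0, and let ψ : [0, ∞) → ℝ be continuously differentiable with f(t) = ψ'(t). Assume e^{δt}ψ(t) → 0 as t → ∞ and that the functions t ↦ e^{2δt}ψ(t)² and t ↦ e^{2δt}f(t)² are integrable on (0, ∞). Then (δ − ε/2) ∫₀^∞ e^{2δt}ψ(t)² dt ≤ (1/(2ε)) ∫₀^∞ e^{2δt}f(t)² dt − ψ(0)²/2. -/

import Mathlib

open MeasureTheory Set Filter

/-- Integrated exponentially weighted `L²` estimate for the zero mode on the
half line: with `f = ψ'`, if `e^{δt}ψ(t) → 0` at infinity and the weighted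
squares are integrable, then
`(δ − ε/2) ∫₀^∞ e^{2δt}ψ² ≤ (1/(2ε)) ∫₀^∞ e^{2δt}f² − ψ(0)²/2`. -/
theorem integrated_weighted_estimate_zero_mode
    (δ ε : ℝ) (hδ : 0 < δ) (hε : 0 < ε)
    (ψ ψ' f : ℝ → ℝ)
    (hderiv : ∀ t ∈ Ici (0 : ℝ), HasDerivAt ψ (ψ' t) t)
    (hcont : ContinuousOn ψ' (Ici (0 : ℝ)))
    (hf : ∀ t, f t = ψ' t)
    (hdecay : Tendsto (fun t => Real.exp (δ * t) * ψ t) atTop (nhds 0))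
    (hint₁ : IntegrableOn (fun t => Real.exp (2 * δ * t) * (ψ t) ^ 2) (Ioi 0))
    (hint₂ : IntegrableOn (fun t => Real.exp (2 * δ * t) * (f t) ^ 2) (Ioi 0)) :
    (δ - ε / 2) * ∫ t in Ioi (0 : ℝ), Real.exp (2 * δ * t) * (ψ t) ^ 2 ≤
      (1 / (2 * ε)) * (∫ t in Ioi (0 : ℝ), Real.exp (2 * δ * t) * (f t) ^ 2)
        - (ψ 0) ^ 2 / 2 := by
  set g : ℝ → ℝ := fun t => Real.exp (2 * δ * t) * ψ t ^ 2 with hg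
  set g' : ℝ → ℝ := fun t =>
      2 * δ * (Real.exp (2 * δ * t) * ψ t ^ 2) +
        Real.exp (2 * δ * t) * (2 * ψ t * f t) with hg'
  have hgderiv : ∀ t ∈ Ici (0 : ℝ), HasDerivAt g (g' t) t := by
    intro t ht
    have hψ := hderiv t ht
    have h1 : HasDerivAt (fun t => Real.exp (2 * δ * t)) (2 * δ * Real.exp (2 * δ * t)) t := by
      have h0 : HasDerivAt (fun t : ℝ => 2 * δ * t) (2 * δ) t := by
        simpa using (hasDerivAt_id t).const_mul (2 * δ)
      simpa [Function.comp_def, mul_comm] using (Real.hasDerivAt_exp (2 * δ * t)).comp t h0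
    have h2 : HasDerivAt (fun t => ψ t ^ 2) (2 * ψ t * ψ' t) t := by
      simpa [mul_comm, mul_assoc] using hψ.fun_pow 2
    have : HasDerivAt (fun y => Real.exp (2 * δ * y) * ψ y ^ 2)
        (2 * δ * Real.exp (2 * δ * t) * ψ t ^ 2 + Real.exp (2 * δ * t) * (2 * ψ t * ψ' t)) t :=
      h1.fun_mul h2
    simp only [hg, hg', hf t]
    convert this using 1
    ring
  have hcross : IntegrableOn (fun t => Real.exp (2 * δ * t) * (2 * ψ t * f t)) (Ioi 0) := by
    have hψc : ContinuousOn ψ (Ici (0 : ℝ)) := fun t ht =>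
      (hderiv t ht).continuousAt.continuousWithinAt
    have hfc : ContinuousOn f (Ici (0 : ℝ)) := by
      have : f = ψ' := funext hf
      rw [this]; exact hcont
    have hmeas : AEStronglyMeasurable (fun t => Real.exp (2 * δ * t) * (2 * ψ t * f t))
        (volume.restrict (Ioi (0 : ℝ))) := by
      apply ContinuousOn.aestronglyMeasurable _ measurableSet_Ioi
      exact ((Real.continuous_exp.comp (continuous_const.mul continuous_id)).continuousOn.mul
        ((continuous_const.continuousOn.mul (hψc.mono Ioi_subset_Ici_self)).mul
          (hfc.mono Ioi_subset_Ici_self)))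
    refine Integrable.mono (hint₁.add hint₂) hmeas ?_
    filter_upwards with t
    have hE := Real.exp_pos (2 * δ * t)
    have h2ab : |2 * ψ t * f t| ≤ ψ t ^ 2 + f t ^ 2 := by
      rcases abs_cases (2 * ψ t * f t) with ⟨h, _⟩ | ⟨h, _⟩ <;> rw [h] <;>
        nlinarith [sq_nonneg (ψ t - f t), sq_nonneg (ψ t + f t)]
    have : |Real.exp (2 * δ * t) * (2 * ψ t * f t)| ≤
        Real.exp (2 * δ * t) * ψ t ^ 2 + Real.exp (2 * δ * t) * f t ^ 2 := by
      rw [abs_mul, abs_of_pos hE]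
      calc Real.exp (2 * δ * t) * |2 * ψ t * f t|
          ≤ Real.exp (2 * δ * t) * (ψ t ^ 2 + f t ^ 2) := by
            exact mul_le_mul_of_nonneg_left h2ab hE.le
        _ = _ := by ring
    have hsnn : (0:ℝ) ≤ Real.exp (2 * δ * t) * ψ t ^ 2 + Real.exp (2 * δ * t) * f t ^ 2 := by
      positivity
    show |Real.exp (2 * δ * t) * (2 * ψ t * f t)| ≤
      |Real.exp (2 * δ * t) * ψ t ^ 2 + Real.exp (2 * δ * t) * f t ^ 2|
    rw [abs_of_nonneg hsnn]
    exact this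
  have hg'int : IntegrableOn g' (Ioi 0) := (hint₁.const_mul (2 * δ)).add hcross
  have hgtend : Tendsto g atTop (nhds 0) := by
    have heq : ∀ t, g t = (Real.exp (δ * t) * ψ t) * (Real.exp (δ * t) * ψ t) := by
      intro t
      simp only [hg]
      rw [show (2 : ℝ) * δ * t = δ * t + δ * t by ring, Real.exp_add]
      ring
    have := hdecay.mul hdecay
    rw [mul_zero] at this
    exact this.congr (fun t => (heq t).symm)
  have hFTC : ∫ t in Ioi (0 : ℝ), g' t = 0 - g 0 :=
    integral_Ioi_of_hasDerivAt_of_tendsto' hgderiv hg'int hgtend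
  have hg0 : g 0 = ψ 0 ^ 2 := by simp [hg]
  have hkey : ∀ t ∈ Ioi (0 : ℝ),
      (2 * δ - ε) * (Real.exp (2 * δ * t) * ψ t ^ 2) -
        (1 / ε) * (Real.exp (2 * δ * t) * f t ^ 2) ≤ g' t := by
    intro t _
    have hd : g' t - ((2 * δ - ε) * (Real.exp (2 * δ * t) * ψ t ^ 2) -
        (1 / ε) * (Real.exp (2 * δ * t) * f t ^ 2)) =
        Real.exp (2 * δ * t) / ε * (ε * ψ t + f t) ^ 2 := by
      simp only [hg']
      field_simp
      ring
    have hnn : 0 ≤ Real.exp (2 * δ * t) / ε * (ε * ψ t + f t) ^ 2 := by positivity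
    linarith [hd, hnn]
  have hint₁' : IntegrableOn
      (fun t => (2 * δ - ε) * (Real.exp (2 * δ * t) * ψ t ^ 2)) (Ioi 0) :=
    hint₁.const_mul _
  have hint₂' : IntegrableOn
      (fun t => (1 / ε) * (Real.exp (2 * δ * t) * f t ^ 2)) (Ioi 0) :=
    hint₂.const_mul _
  have hmono : ∫ t in Ioi (0 : ℝ),
      ((2 * δ - ε) * (Real.exp (2 * δ * t) * ψ t ^ 2) -
        (1 / ε) * (Real.exp (2 * δ * t) * f t ^ 2)) ≤ ∫ t in Ioi (0 : ℝ), g' t :=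
    setIntegral_mono_on (hint₁'.sub hint₂') hg'int measurableSet_Ioi hkey
  rw [integral_sub hint₁' hint₂', integral_const_mul, integral_const_mul] at hmono
  rw [hFTC, hg0] at hmono
  have h1 : (1 : ℝ) / (2 * ε) = (1 / ε) / 2 := by
    field_simp
  rw [h1]
  linarith [hmono]
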